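/- arXiv:1703.04169 — 4 statements merged into one kernel-verified Lean document; each statement's English description precedes it below -/
import Mathlib

section
/- Let F be a free group and a ∈ F a primitive element (part of some basis of F). If H is a subgroup of F containing a, then a is a primitive element of H (H is free by the Nielsen–Schreier theorem). -/
noncomputable section
open scoped Classical
open CategoryTheory CategoryTheory.ActionCategory CategoryTheory.SingleObj Quiver FreeGroup
open IsFreeGroupoid

/-- An element of a group is primitive if it is part of some free basis. -/
def IsPrimitive {G : Type*} [Group G] (a : G) : Prop :=
  ∃ (ι : Type) (b : FreeGroupBasis ι G) (i : ι), b i = a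

namespace MyNS

instance (priority := 5000) actionGroupoidIsFree' {X A : Type} [MulAction (FreeGroup X) A] :
    IsFreeGroupoid (ActionCategory (FreeGroup X) A) where
  quiverGenerators :=
    ⟨fun a b => { e : X // FreeGroup.of e • a.back = b.back }⟩
  of := fun (e : { e : X // _ }) => ⟨FreeGroup.of e, e.property⟩
  unique_lift := by
    intro Y _ f
    let f' : X → (A → Y) ⋊[mulAutArrow] FreeGroup X := fun e =>
      ⟨fun b => @f ⟨(), _⟩ ⟨(), b⟩ ⟨e, smul_inv_smul _ b⟩, FreeGroup.of e⟩
    let F' : FreeGroup X →* (A → Y) ⋊[mulAutArrow] FreeGroup X := FreeGroup.lift f'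
    have hF' : ∀ e, F' (FreeGroup.of e) = f' e := fun e => FreeGroup.lift_apply_of
    refine ⟨uncurry F' ?_, ?_, ?_⟩
    · suffices SemidirectProduct.rightHom.comp F' = MonoidHom.id _ by
        exact DFunLike.ext_iff.mp this
      ext x
      simp [F', f']
    · rintro ⟨⟨⟩, a : A⟩ ⟨⟨⟩, b⟩ ⟨e, h : FreeGroup.of e • a = b⟩
      change (F' (FreeGroup.of _)).left _ = _
      rw [hF']
      cases inv_smul_eq_iff.mpr h.symm
      rfl
    · intro E hE
      have : curry E = F' := by
        apply FreeGroup.ext_hom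
        intro e
        rw [hF']
        ext
        · convert! hE _ _ _
          rfl
        · rfl
      apply Functor.hext
      · intro
        apply Unit.ext
      · refine ActionCategory.cases ?_
        intros
        rename_i t g
        apply heq_of_eq
        show ((curry E) g).left t = (F' g).left t
        rw [this]

namespace SpanningTree

variable {G : Type} [Groupoid.{0} G] [IsFreeGroupoid G]
  (T : WideSubquiver (Symmetrify <| Generators G)) [Arborescence T]

def root' : G := show T from root T

def homOfPath : ∀ {a : G}, Path (root T) a → (root' T ⟶ a)
  | _, Path.nil => 𝟙 _
  | _, Path.cons p f => homOfPath p ≫ Sum.recOn f.val (fun e => of e) fun e => inv (of e) (I := IsIso.of_groupoid _)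

def treeHom (a : G) : root' T ⟶ a := homOfPath T (@default _ (@Unique.instInhabited _ (Arborescence.uniquePath (V := T) a)))

theorem treeHom_eq {a : G} (p : Path (root T) a) : treeHom T a = homOfPath T p := by
  rw [treeHom]
  exact congrArg (homOfPath T) ((Arborescence.uniquePath (V := T) a).uniq p).symm

@[simp]
theorem treeHom_root : treeHom T (root' T) = 𝟙 _ :=
  _root_.trans (treeHom_eq T Path.nil) rfl

def loopOfHom {a b : G} (p : a ⟶ b) : End (root' T) :=
  treeHom T a ≫ p ≫ inv (treeHom T b)

theorem loopOfHom_eq_id {a b : Generators G} (e) (H : e ∈ wideSubquiverSymmetrify T a b) :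
    loopOfHom T (of e) = 𝟙 (root' T) := by
  erw [loopOfHom, ← Category.assoc, IsIso.comp_inv_eq, Category.id_comp]
  cases' H with H H
  · erw [treeHom_eq T (Path.cons (@default _ (@Unique.instInhabited _ (Arborescence.uniquePath (V := T) a))) ⟨Sum.inl e, H⟩), homOfPath]
    rfl
  · erw [treeHom_eq T (Path.cons (@default _ (@Unique.instInhabited _ (Arborescence.uniquePath (V := T) b))) ⟨Sum.inr e, H⟩), homOfPath]
    erw [Category.assoc, IsIso.inv_hom_id, Category.comp_id]
    rfl

@[simps]
def functorOfMonoidHom {X} [Monoid X] (f : End (root' T) →* X) :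
    G ⥤ CategoryTheory.SingleObj X where
  obj _ := ()
  map p := f (loopOfHom T p)
  map_id := by
    intro a
    dsimp only [loopOfHom]
    rw [Category.id_comp, IsIso.hom_inv_id, ← End.one_def, f.map_one, id_as_one]
  map_comp := by
    intros
    rw [comp_as_mul, ← f.map_mul]
    simp only [IsIso.inv_hom_id_assoc, loopOfHom, End.mul_def, Category.assoc]

def endBasis :
    FreeGroupBasis ((wideSubquiverEquivSetTotal <| wideSubquiverSymmetrify T)ᶜ : Set _)
      (End (root' T)) :=
  FreeGroupBasis.ofUniqueLift ((wideSubquiverEquivSetTotal <| wideSubquiverSymmetrify T)ᶜ : Set _)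
    (fun e => loopOfHom T (of e.val.hom))
    (by
      intro X _ f
      let f' : Labelling (Generators G) X := fun a b e =>
        if h : e ∈ wideSubquiverSymmetrify T a b then 1 else f ⟨⟨a, b, e⟩, h⟩
      rcases unique_lift f' with ⟨F', hF', uF'⟩
      refine ⟨F'.mapEnd _, ?_, ?_⟩
      · suffices ∀ {x y} (q : x ⟶ y), F'.map (loopOfHom T q) = (F'.map q : X) by
          rintro ⟨⟨a, b, e⟩, h⟩
          erw [Functor.mapEnd_apply, this, hF']
          exact dif_neg h
        intros x y q
        suffices ∀ {a} (p : Path (root T) a), F'.map (homOfPath T p) = 1 by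
          simp only [this, treeHom, comp_as_mul, inv_as_inv, loopOfHom, inv_one, mul_one,
            one_mul, Functor.map_inv, Functor.map_comp]
          erw [this (a := x) (@default _ (@Unique.instInhabited _ (Arborescence.uniquePath (V := T) x))),
            this (a := y) (@default _ (@Unique.instInhabited _ (Arborescence.uniquePath (V := T) y)))]
          show (1 : X)⁻¹ * F'.map q * 1 = F'.map q
          rw [inv_one, one_mul, mul_one]
        intro a p
        induction' p with b c p e ih
        · rw [homOfPath]
          erw [F'.map_id, id_as_one]
        erw [homOfPath, F'.map_comp, comp_as_mul, ih, mul_one]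
        rcases e with ⟨e | e, eT⟩
        · erw [hF']
          exact dif_pos (Or.inl eT)
        · erw [F'.map_inv, inv_as_inv, inv_eq_one, hF']
          exact dif_pos (Or.inr eT)
      · intro E hE
        ext x
        suffices (functorOfMonoidHom T E).map x = F'.map x by
          simpa only [loopOfHom, functorOfMonoidHom, IsIso.inv_id, treeHom_root,
            Category.id_comp, Category.comp_id] using! this
        congr
        apply uF'
        intro a b e
        change E (loopOfHom T _) = dite _ _ _
        split_ifs with h
        · rw [loopOfHom_eq_id T e h, ← End.one_def, E.map_one]
        · exact hE ⟨⟨a, b, e⟩, h⟩)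

@[simp] lemma endBasis_apply (e) : endBasis T e = loopOfHom T (of e.val.hom) :=
  FreeGroup.lift_apply_of

end SpanningTree

lemma key {X : Type} (i₀ : X) (H : Subgroup (FreeGroup X)) (hmem : FreeGroup.of i₀ ∈ H) :
    IsPrimitive (⟨FreeGroup.of i₀, hmem⟩ : H) := by
  let G := ActionCategory (FreeGroup X) (FreeGroup X ⧸ H)
  let r : G := objEquiv _ _ ((1 : FreeGroup X) : FreeGroup X ⧸ H)
  letI : RootedConnected (show Symmetrify (Generators G) from r) :=
    ⟨fun b => path_nonempty_of_hom (@CategoryTheory.nonempty_hom_of_preconnected_groupoid _ _ (inferInstance : IsConnected (ActionCategory (FreeGroup X) (FreeGroup X ⧸ H))).toIsPreconnected r b)⟩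
  let T : WideSubquiver (Symmetrify (Generators G)) :=
    geodesicSubtree (show Symmetrify (Generators G) from r)
  have hroot : SpanningTree.root' T = r := rfl
  -- the generating arrow corresponding to i₀, a loop at the base point
  have hsmul : FreeGroup.of i₀ • (r : G).back = (r : G).back := by
    show FreeGroup.of i₀ • ((1 : FreeGroup X) : FreeGroup X ⧸ H) = _
    rw [MulAction.Quotient.smul_mk, smul_eq_mul, mul_one]
    exact QuotientGroup.eq.mpr (by simpa using inv_mem hmem)
  let ε : @Quiver.Hom (Generators G) _ (show Generators G from r) (show Generators G from r) :=
    ⟨i₀, hsmul⟩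
  -- shortest path from root to root is nil, so ε is not in the tree
  have hnil : ∀ {c : Symmetrify (Generators G)}
      (p : Path (show Symmetrify (Generators G) from r) c)
      (e : c ⟶ (show Symmetrify (Generators G) from r)),
      shortestPath (show Symmetrify (Generators G) from r)
        (show Symmetrify (Generators G) from r) ≠ p.cons e := by
    intro c p e hp
    have h0 : (shortestPath (show Symmetrify (Generators G) from r)
        (show Symmetrify (Generators G) from r)).length ≤ (Path.nil :
        Path (show Symmetrify (Generators G) from r) _).length :=
      shortest_path_spec _ Path.nil
    rw [hp] at h0
    simp [Path.length_cons] at h0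
    exact Nat.not_succ_le_zero _ h0
  have hcompl : (⟨_, _, ε⟩ : Total (Generators G)) ∈
      ((wideSubquiverEquivSetTotal <| wideSubquiverSymmetrify T)ᶜ : Set _) := by
    intro hc
    rcases hc with hc | hc
    · rcases hc with ⟨p, hp⟩
      exact hnil p _ hp
    · rcases hc with ⟨p, hp⟩
      exact hnil p _ hp
  let e1 : End (SpanningTree.root' T) ≃* H := endMulEquivSubgroup H
  let basis := (SpanningTree.endBasis T).map e1
  refine ⟨_, basis, ⟨_, hcompl⟩, ?_⟩
  have hloop : SpanningTree.loopOfHom T (of ε) = (of ε : End (SpanningTree.root' T)) := by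
    show SpanningTree.treeHom T (SpanningTree.root' T) ≫ _ ≫
      inv (SpanningTree.treeHom T (SpanningTree.root' T)) (I := IsIso.of_groupoid _) = _
    rw [SpanningTree.treeHom_root]
    simp
    erw [Category.id_comp, IsIso.inv_id, Category.comp_id]
    rfl
  show e1 (SpanningTree.endBasis T _) = _
  rw [SpanningTree.endBasis_apply]
  show e1 (SpanningTree.loopOfHom T (of ε)) = _
  rw [hloop]
  rfl

end MyNS

theorem stmt2 {α : Type} (a : FreeGroup α) (ha : IsPrimitive a)
    (H : Subgroup (FreeGroup α)) (haH : a ∈ H) :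
    IsPrimitive (⟨a, haH⟩ : H) := by
  obtain ⟨ι, b, i₀, hb⟩ := ha
  let e : FreeGroup α ≃* FreeGroup ι := b.repr
  have hea : e a = FreeGroup.of i₀ := by rw [← hb]; exact b.repr_apply_coe i₀
  let H' := H.map (e : FreeGroup α →* FreeGroup ι)
  have hmem : FreeGroup.of i₀ ∈ H' := ⟨a, haH, hea⟩
  obtain ⟨κ, b', j, hb'⟩ := MyNS.key i₀ H' hmem
  refine ⟨κ, b'.map (e.subgroupMap H).symm, j, ?_⟩
  rw [FreeGroupBasis.map_apply, hb', MulEquiv.subgroupMap_symm_apply]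
  ext
  show e.symm (FreeGroup.of i₀) = a
  rw [← hea, MulEquiv.symm_apply_apply]

end
end

section
/- Let e₁, …, eₙ be a free basis of the free group Fₙ of rank n ≥ 1, and let m₁, …, mₙ be integers all of absolute value different from 1 (and the product nontrivial). Then the element e₁^{m₁} e₂^{m₂} ⋯ eₙ^{mₙ} is not a primitive element of Fₙ. -/
@[ext]
structure AffH (q : ℕ) where
  a : (ZMod q)ˣ
  b : ZMod q

namespace AffH

variable {q : ℕ}

def prodEquiv : AffH q ≃ (ZMod q)ˣ × ZMod q where
  toFun x := (x.a, x.b)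
  invFun p := ⟨p.1, p.2⟩
  left_inv _ := rfl
  right_inv _ := rfl

instance [NeZero q] : Fintype (AffH q) := Fintype.ofEquiv _ prodEquiv.symm
instance : DecidableEq (AffH q) := prodEquiv.decidableEq

instance : Mul (AffH q) := ⟨fun x y => ⟨x.a * y.a, x.b + (x.a : ZMod q) * y.b⟩⟩
instance : One (AffH q) := ⟨⟨1, 0⟩⟩
instance : Inv (AffH q) := ⟨fun x => ⟨x.a⁻¹, -((x.a⁻¹ : (ZMod q)ˣ) : ZMod q) * x.b⟩⟩

@[simp] lemma a_mul (x y : AffH q) : (x * y).a = x.a * y.a := rfl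
@[simp] lemma b_mul (x y : AffH q) : (x * y).b = x.b + (x.a : ZMod q) * y.b := rfl
@[simp] lemma a_one : (1 : AffH q).a = 1 := rfl
@[simp] lemma b_one : (1 : AffH q).b = 0 := rfl
@[simp] lemma a_inv (x : AffH q) : x⁻¹.a = x.a⁻¹ := rfl
@[simp] lemma b_inv (x : AffH q) : x⁻¹.b = -((x.a⁻¹ : (ZMod q)ˣ) : ZMod q) * x.b := rfl

instance : Group (AffH q) where
  mul_assoc x y z := by ext <;> simp [mul_assoc] <;> ring
  one_mul x := by ext <;> simp
  mul_one x := by ext <;> simp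
  inv_mul_cancel x := by ext <;> simp

def fstHom : AffH q →* (ZMod q)ˣ where
  toFun := AffH.a
  map_one' := rfl
  map_mul' _ _ := rfl

def uHom : (ZMod q)ˣ →* AffH q where
  toFun a := ⟨a, 0⟩
  map_one' := rfl
  map_mul' x y := by ext <;> simp

/-- zpow formula: the second component of `(a, b) ^ m` is linear in `b`, with coefficient
the second component of `(a, 1) ^ m`. -/
lemma zpow_formula' (a : (ZMod q)ˣ) (m : ℤ) :
    ∀ b : ZMod q, (⟨a, b⟩ : AffH q) ^ m = ⟨a ^ m, ((⟨a, 1⟩ : AffH q) ^ m).b * b⟩ := by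
  induction m using Int.induction_on with
  | zero => intro b; ext <;> simp
  | succ k ih =>
      intro b
      have ih1 := ih 1
      simp only [zpow_add_one]
      rw [ih b, ih1]
      ext
      · simp
      · simp; ring
  | pred k ih =>
      intro b
      have ih1 := ih 1
      simp only [zpow_sub_one]
      rw [ih b, ih1]
      ext
      · simp
      · simp; ring

/-- An element `(a,b)` with `a ≠ 1` is conjugate to `(a, 0)`, so satisfies
`x ^ m = 1` whenever `a ^ m = 1`. Needs `q` prime so that `ZMod q` is a field. -/
lemma zpow_eq_one [Fact (Nat.Prime q)] {a : (ZMod q)ˣ} (ha : (a : ZMod q) ≠ 1)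
    {m : ℤ} (hm : a ^ m = 1) (b : ZMod q) : (⟨a, b⟩ : AffH q) ^ m = 1 := by
  set t : ZMod q := (1 - (a : ZMod q))⁻¹ * b with ht
  have hsub : (1 : ZMod q) - (a : ZMod q) ≠ 0 := sub_ne_zero.mpr (Ne.symm ha)
  have hconj : (⟨a, b⟩ : AffH q) = (MulAut.conj (⟨1, t⟩ : AffH q)) (uHom a) := by
    ext
    · simp [uHom, MulAut.conj]
    · simp [uHom, MulAut.conj]
      linear_combination (-(1 - (a : ZMod q))) * ht + (-b) * mul_inv_cancel₀ hsub
  rw [hconj, ← map_zpow, ← map_zpow, hm, map_one, map_one]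

/-- Additivity of the second component of products in the second arguments. -/
lemma snd_prod_add (l : List ((ZMod q)ˣ × ZMod q × ZMod q)) :
    ((l.map fun t => (⟨t.1, t.2.1 + t.2.2⟩ : AffH q)).prod).b
      = ((l.map fun t => (⟨t.1, t.2.1⟩ : AffH q)).prod).b
        + ((l.map fun t => (⟨t.1, t.2.2⟩ : AffH q)).prod).b := by
  induction l with
  | nil => simp
  | cons t l ih => simp [ih]; ring

end AffH

lemma zpow_formula {q : ℕ} (a : (ZMod q)ˣ) (m : ℤ) (b : ZMod q) :
    (⟨a, b⟩ : AffH q) ^ m = ⟨a ^ m, ((⟨a, 1⟩ : AffH q) ^ m).b * b⟩ :=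
  AffH.zpow_formula' a m b

namespace AffH

section Word

variable {q n : ℕ} (m : Fin n → ℤ)

/-- The word map `x ↦ x₁^{m₁} ⋯ xₙ^{mₙ}`. -/
def W (x : Fin n → AffH q) : AffH q := (List.ofFn fun i => x i ^ m i).prod

lemma W_a (x : Fin n → AffH q) :
    (W m x).a = (List.ofFn fun i => (x i).a ^ m i).prod := by
  have h := map_list_prod (fstHom (q := q)) (List.ofFn fun i => x i ^ m i)
  have h2 : (List.ofFn fun i => x i ^ m i).map (fstHom (q := q))
      = List.ofFn fun i => (x i).a ^ m i := by
    rw [List.map_ofFn]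
    congr 1
    funext i
    exact map_zpow fstHom (x i) (m i)
  rw [h2] at h
  exact h

lemma W_a_pair (a : Fin n → (ZMod q)ˣ) (u v : Fin n → ZMod q) :
    (W m fun i => (⟨a i, u i⟩ : AffH q)).a = (W m fun i => (⟨a i, v i⟩ : AffH q)).a := by
  rw [W_a, W_a]

lemma W_list (a : Fin n → (ZMod q)ˣ) (w : Fin n → ZMod q) :
    (List.ofFn fun i => (⟨a i, w i⟩ : AffH q) ^ m i)
      = List.ofFn fun i => (⟨a i ^ m i, ((⟨a i, 1⟩ : AffH q) ^ m i).b * w i⟩ : AffH q) := by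
  congr 1
  funext i
  exact zpow_formula (a i) (m i) (w i)

lemma W_b_add (a : Fin n → (ZMod q)ˣ) (u v : Fin n → ZMod q) :
    (W m fun i => (⟨a i, (u + v) i⟩ : AffH q)).b
      = (W m fun i => (⟨a i, u i⟩ : AffH q)).b + (W m fun i => (⟨a i, v i⟩ : AffH q)).b := by
  classical
  set s : Fin n → ZMod q := fun i => ((⟨a i, 1⟩ : AffH q) ^ m i).b with hs
  set l : List ((ZMod q)ˣ × ZMod q × ZMod q) :=
    List.ofFn (fun i => (a i ^ m i, s i * u i, s i * v i)) with hl
  have h1 : (List.ofFn fun i => (⟨a i, (u + v) i⟩ : AffH q) ^ m i)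
      = l.map fun t => (⟨t.1, t.2.1 + t.2.2⟩ : AffH q) := by
    rw [W_list, hl, List.map_ofFn]
    congr 1
    funext i
    simp [Function.comp, mul_add, hs]
  have h2 : (List.ofFn fun i => (⟨a i, u i⟩ : AffH q) ^ m i)
      = l.map fun t => (⟨t.1, t.2.1⟩ : AffH q) := by
    rw [W_list, hl, List.map_ofFn]; rfl
  have h3 : (List.ofFn fun i => (⟨a i, v i⟩ : AffH q) ^ m i)
      = l.map fun t => (⟨t.1, t.2.2⟩ : AffH q) := by
    rw [W_list, hl, List.map_ofFn]; rfl
  show ((List.ofFn fun i => (⟨a i, (u + v) i⟩ : AffH q) ^ m i).prod).b = _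
  rw [h1]
  rw [show (W m fun i => (⟨a i, u i⟩ : AffH q)) = (l.map fun t => (⟨t.1, t.2.1⟩ : AffH q)).prod from congrArg List.prod h2]
  rw [show (W m fun i => (⟨a i, v i⟩ : AffH q)) = (l.map fun t => (⟨t.1, t.2.2⟩ : AffH q)).prod from congrArg List.prod h3]
  exact snd_prod_add l

/-- The second component of the word map on a fixed stratum, as an additive hom. -/
def Fhom (a : Fin n → (ZMod q)ˣ) : (Fin n → ZMod q) →+ ZMod q :=
  AddMonoidHom.mk' (fun b => (W m fun i => (⟨a i, b i⟩ : AffH q)).b)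
    (fun u v => W_b_add m a u v)

@[simp] lemma Fhom_apply (a : Fin n → (ZMod q)ˣ) (b : Fin n → ZMod q) :
    Fhom m a b = (W m fun i => (⟨a i, b i⟩ : AffH q)).b := rfl

end Word

end AffH

namespace AffH

section Count

variable {q n : ℕ} (m : Fin n → ℤ) [Fact (Nat.Prime q)]

lemma strata_le (a : Fin n → (ZMod q)ˣ) :
    Fintype.card {b : Fin n → ZMod q // W m (fun i => (⟨a i, b i⟩ : AffH q)) = ⟨1, 1⟩}
      ≤ Fintype.card {b : Fin n → ZMod q // W m (fun i => (⟨a i, b i⟩ : AffH q)) = 1} := by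
  classical
  by_cases hex : ∃ b₀ : Fin n → ZMod q, W m (fun i => (⟨a i, b₀ i⟩ : AffH q)) = ⟨1, 1⟩
  · obtain ⟨b₀, hb₀⟩ := hex
    have hmap : ∀ b : Fin n → ZMod q, W m (fun i => (⟨a i, b i⟩ : AffH q)) = ⟨1, 1⟩ →
        W m (fun i => (⟨a i, (b - b₀) i⟩ : AffH q)) = 1 := by
      intro b hb
      ext
      · rw [W_a_pair m a (b - b₀) b, hb]
        rfl
      · have h1 : Fhom m a (b - b₀) = Fhom m a b - Fhom m a b₀ := map_sub _ _ _
        rw [Fhom_apply, Fhom_apply, Fhom_apply, hb, hb₀] at h1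
        show (W m fun i => (⟨a i, (b - b₀) i⟩ : AffH q)).b = (0 : ZMod q)
        rw [h1]
        simp
    refine Fintype.card_le_of_injective
      (fun x => ⟨x.1 - b₀, hmap x.1 x.2⟩) ?_
    intro x y hxy
    have h := congrArg Subtype.val hxy
    exact Subtype.ext (sub_left_injective h)
  · have : IsEmpty {b : Fin n → ZMod q // W m (fun i => (⟨a i, b i⟩ : AffH q)) = ⟨1, 1⟩} :=
      ⟨fun x => hex ⟨x.1, x.2⟩⟩
    rw [Fintype.card_eq_zero]
    exact Nat.zero_le _

/-- Decomposition of the solution set into strata according to the multiplicative parts. -/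
def strataEquiv (h : AffH q) :
    {x : Fin n → AffH q // W m x = h} ≃
      Σ a : Fin n → (ZMod q)ˣ, {b : Fin n → ZMod q // W m (fun i => (⟨a i, b i⟩ : AffH q)) = h} where
  toFun x := ⟨fun i => (x.1 i).a, fun i => (x.1 i).b, x.2⟩
  invFun p := ⟨fun i => ⟨p.1 i, p.2.1 i⟩, p.2.2⟩
  left_inv x := rfl
  right_inv p := rfl

lemma card_eq_sum (h : AffH q) :
    Nat.card {x : Fin n → AffH q // W m x = h}
      = ∑ a : Fin n → (ZMod q)ˣ,
          Fintype.card {b : Fin n → ZMod q // W m (fun i => (⟨a i, b i⟩ : AffH q)) = h} := by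
  classical
  rw [Nat.card_eq_fintype_card, Fintype.card_congr (strataEquiv m h), Fintype.card_sigma]

lemma main_lt
    (hdeg : ∃ a : Fin n → (ZMod q)ˣ, ∀ i (b : ZMod q), (⟨a i, b⟩ : AffH q) ^ m i = 1) :
    Nat.card {x : Fin n → AffH q // W m x = (⟨1, 1⟩ : AffH q)}
      < Nat.card {x : Fin n → AffH q // W m x = 1} := by
  classical
  obtain ⟨ad, had⟩ := hdeg
  rw [card_eq_sum, card_eq_sum]
  apply Finset.sum_lt_sum
  · intro a _
    exact strata_le m a
  · refine ⟨ad, Finset.mem_univ _, ?_⟩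
    have hW1 : ∀ b : Fin n → ZMod q, W m (fun i => (⟨ad i, b i⟩ : AffH q)) = 1 := by
      intro b
      apply List.prod_eq_one
      intro x hx
      rw [List.mem_ofFn] at hx
      obtain ⟨i, rfl⟩ := hx
      exact had i (b i)
    have h0 : Fintype.card {b : Fin n → ZMod q
        // W m (fun i => (⟨ad i, b i⟩ : AffH q)) = (⟨1, 1⟩ : AffH q)} = 0 := by
      rw [Fintype.card_eq_zero_iff]
      refine ⟨fun x => ?_⟩
      have hx := x.2
      rw [hW1 x.1] at hx
      have := congrArg AffH.b hx
      simp at this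
    have h1 : 0 < Fintype.card {b : Fin n → ZMod q
        // W m (fun i => (⟨ad i, b i⟩ : AffH q)) = 1} := by
      rw [Fintype.card_pos_iff]
      exact ⟨⟨0, hW1 0⟩⟩
    rw [h0]
    try exact h1

end Count

end AffH

namespace AffH

/-- Existence of a "degenerate" tuple of units: for each `i`, a unit `aᵢ` such that
`(aᵢ, b) ^ mᵢ = 1` for every `b`. -/
lemma exists_deg {q : ℕ} [Fact (Nat.Prime q)] {n : ℕ} (m : Fin n → ℤ)
    (hm : ∀ i, (m i).natAbs ≠ 1) (hdvd : ∀ i, m i ≠ 0 → (m i).natAbs ∣ q - 1) :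
    ∃ a : Fin n → (ZMod q)ˣ, ∀ i (b : ZMod q), (⟨a i, b⟩ : AffH q) ^ m i = 1 := by
  have H : ∀ i, ∃ a : (ZMod q)ˣ, ∀ b : ZMod q, (⟨a, b⟩ : AffH q) ^ m i = 1 := by
    intro i
    by_cases h0 : m i = 0
    · exact ⟨1, fun b => by rw [h0, zpow_zero]⟩
    · set d := (m i).natAbs with hdd
      have hd0 : d ≠ 0 := Int.natAbs_ne_zero.mpr h0
      have hd2 : 2 ≤ d := by
        have := hm i
        omega
      obtain ⟨g, hg⟩ := IsCyclic.exists_generator (α := (ZMod q)ˣ)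
      have hord : orderOf g = q - 1 := by
        rw [orderOf_eq_card_of_forall_mem_zpowers hg, Nat.card_eq_fintype_card, ZMod.card_units]
      have hq1 : 1 < q := (Fact.out : q.Prime).one_lt
      have hdq : d ∣ q - 1 := hdvd i h0
      set a := g ^ ((q - 1) / d) with ha
      have had : a ^ d = 1 := by
        rw [ha, ← pow_mul, Nat.div_mul_cancel hdq, ← hord, pow_orderOf_eq_one]
      have hne1 : a ≠ 1 := by
        intro h
        have h2 : orderOf g ∣ (q - 1) / d := orderOf_dvd_of_pow_eq_one h
        rw [hord] at h2
        have hles : (q - 1) / d < q - 1 := Nat.div_lt_self (by omega) hd2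
        have hdle : d ≤ q - 1 := Nat.le_of_dvd (by omega) hdq
        have hpos : 0 < (q - 1) / d := Nat.div_pos hdle (by omega)
        have := Nat.le_of_dvd hpos h2
        omega
      have hcoe : (a : ZMod q) ≠ 1 := fun h => hne1 (Units.ext h)
      have hzp : a ^ (m i) = 1 := by
        obtain ⟨k, hk⟩ := Int.natAbs_dvd.mpr (dvd_refl (m i))
        rw [hk, zpow_mul, zpow_natCast, had, one_zpow]
      exact ⟨a, fun b => zpow_eq_one hcoe hzp b⟩
  choose a ha using H
  exact ⟨a, ha⟩

end AffH

/-- Moving the value of a function at one fixed point gives equivalent subtypes. -/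
noncomputable def updEquiv {ι : Type} {H : Type*} (i₀ : ι) (h h' : H) :
    {f : ι → H // f i₀ = h} ≃ {f : ι → H // f i₀ = h'} := by
  classical
  exact
  { toFun := fun f => ⟨Function.update f.1 i₀ h', Function.update_self _ _ _⟩
    invFun := fun f => ⟨Function.update f.1 i₀ h, Function.update_self _ _ _⟩
    left_inv := fun f => by
      ext x
      by_cases hx : x = i₀
      · subst hx
        simp [f.2]
      · simp [Function.update_of_ne hx]
    right_inv := fun f => by
      ext x
      by_cases hx : x = i₀
      · subst hx
        simp [f.2]
      · simp [Function.update_of_ne hx] }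

theorem stmt3 (n : ℕ) (hn : 1 ≤ n) (m : Fin n → ℤ) (hm : ∀ i, (m i).natAbs ≠ 1)
    (hne : (List.ofFn fun i => (FreeGroup.of i : FreeGroup (Fin n)) ^ (m i)).prod ≠ 1) :
    ¬ IsPrimitive ((List.ofFn fun i => (FreeGroup.of i : FreeGroup (Fin n)) ^ (m i)).prod) := by
  rintro ⟨ι, bas, i₀, hb⟩
  classical
  -- choose a prime `q ≡ 1` modulo all the `|mᵢ|`
  obtain ⟨q, hq, -, hmod⟩ := Nat.exists_prime_gt_modEq_one
    (k := ∏ i : Fin n, max 1 (m i).natAbs) 1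
    (Finset.prod_pos (fun i _ => Nat.lt_of_lt_of_le Nat.one_pos (le_max_left 1 _))).ne'
  haveI : Fact (Nat.Prime q) := ⟨hq⟩
  have hdvd : ∀ i, m i ≠ 0 → (m i).natAbs ∣ q - 1 := by
    intro i h0
    have h1 : (m i).natAbs ∣ ∏ i : Fin n, max 1 (m i).natAbs := by
      have hmax : max 1 (m i).natAbs = (m i).natAbs := by
        have := Int.natAbs_ne_zero.mpr h0
        omega
      rw [← hmax]
      exact Finset.dvd_prod_of_mem _ (Finset.mem_univ i)
    have h2 : (∏ i : Fin n, max 1 (m i).natAbs) ∣ q - 1 :=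
      (Nat.modEq_iff_dvd' hq.one_lt.le).mp hmod.symm
    exact h1.trans h2
  have hdeg := AffH.exists_deg (q := q) m hm hdvd
  -- the word map equals evaluation of lifted homomorphisms
  have hlift : ∀ x : Fin n → AffH q,
      (FreeGroup.lift x) ((List.ofFn fun i => (FreeGroup.of i : FreeGroup (Fin n)) ^ (m i)).prod)
        = AffH.W m x := by
    intro x
    rw [map_list_prod, List.map_ofFn]
    have hc : (⇑(FreeGroup.lift x) ∘ fun i => (FreeGroup.of i : FreeGroup (Fin n)) ^ m i)
        = fun i => x i ^ m i := by
      funext i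
      simp [map_zpow]
    rw [hc]
    rfl
  have hbl : ∀ (f : ι → AffH q) (i : ι), bas.lift f (bas i) = f i := by
    intro f i
    simp [FreeGroupBasis.lift]
  have hval : ∀ φ : FreeGroup (Fin n) →* AffH q,
      bas.lift.symm φ i₀
        = φ ((List.ofFn fun i => (FreeGroup.of i : FreeGroup (Fin n)) ^ (m i)).prod) := by
    intro φ
    have := hbl (bas.lift.symm φ) i₀
    rw [Equiv.apply_symm_apply, hb] at this
    exact this.symm
  have E : ∀ h : AffH q,
      {x : Fin n → AffH q // AffH.W m x = h} ≃ {f : ι → AffH q // f i₀ = h} := by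
    intro h
    refine (Equiv.subtypeEquiv
        (q := fun φ : FreeGroup (Fin n) →* AffH q =>
          φ ((List.ofFn fun i => (FreeGroup.of i : FreeGroup (Fin n)) ^ (m i)).prod) = h)
        FreeGroup.lift fun x => ?_).trans
      (Equiv.subtypeEquiv (q := fun f : ι → AffH q => f i₀ = h) bas.lift.symm fun φ => ?_)
    · show AffH.W m x = h ↔ (FreeGroup.lift x)
          ((List.ofFn fun i => (FreeGroup.of i : FreeGroup (Fin n)) ^ (m i)).prod) = h
      rw [hlift x]
    · show φ ((List.ofFn fun i => (FreeGroup.of i : FreeGroup (Fin n)) ^ (m i)).prod) = h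
          ↔ bas.lift.symm φ i₀ = h
      rw [hval φ]
  have key1 : Nat.card {x : Fin n → AffH q // AffH.W m x = (⟨1, 1⟩ : AffH q)}
      = Nat.card {x : Fin n → AffH q // AffH.W m x = 1} :=
    Nat.card_congr ((E ⟨1, 1⟩).trans ((updEquiv i₀ _ _).trans (E 1).symm))
  exact (AffH.main_lt m hdeg).ne key1
end

section
/- Let F be a free group with basis {e₁, e₂, …, e_{2n}, …}. Define a_{ij} := e_{i+j}⁵ e_i and b_{kl} := e_k⁻¹ e_{k+l}⁻⁴ for 1 ≤ i,j,k,l ≤ n. If i ≠ k, or (i,j) = (k,l), then the pair (a_{ij}, b_{kl}) can be extended to a free basis of F; in particular a_{ij} and b_{kl} freely generate a free subgroup of rank 2. -/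
lemma aux (f g : ℕ → FreeGroup ℕ)
    (hfg : ∀ m, FreeGroup.lift g (f m) = FreeGroup.of m)
    (hgf : ∀ m, FreeGroup.lift f (g m) = FreeGroup.of m)
    (s t : ℕ) (hst : s ≠ t) (a b : FreeGroup ℕ) (hs : f s = a) (ht : f t = b) :
    (∃ (ι : Type) (B : FreeGroupBasis ι (FreeGroup ℕ)) (s' t' : ι), s' ≠ t' ∧
        B s' = a ∧ B t' = b) ∧
    ∃ c : FreeGroupBasis (Fin 2) (Subgroup.closure ({a, b} : Set (FreeGroup ℕ))),
      c 0 = ⟨a, Subgroup.subset_closure (by simp)⟩ ∧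
      c 1 = ⟨b, Subgroup.subset_closure (by simp)⟩ := by
  have h1 : (FreeGroup.lift g).comp (FreeGroup.lift f) = MonoidHom.id _ :=
    FreeGroup.ext_hom _ _ (by simp [hfg])
  have h2 : (FreeGroup.lift f).comp (FreeGroup.lift g) = MonoidHom.id _ :=
    FreeGroup.ext_hom _ _ (by simp [hgf])
  let φ : FreeGroup ℕ ≃* FreeGroup ℕ :=
    MonoidHom.toMulEquiv (FreeGroup.lift f) (FreeGroup.lift g) h1 h2
  constructor
  · refine ⟨ℕ, (FreeGroupBasis.ofFreeGroup ℕ).map φ, s, t, hst, ?_, ?_⟩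
    · simpa [φ] using hs
    · simpa [φ] using ht
  · -- second part
    set w : Fin 2 → FreeGroup ℕ := ![a, b] with hw
    let h : FreeGroup (Fin 2) →* FreeGroup ℕ := FreeGroup.lift w
    have hcomp : (FreeGroup.lift g).comp h =
        FreeGroup.lift (fun x : Fin 2 => FreeGroup.of (![s, t] x)) := by
      apply FreeGroup.ext_hom
      intro x
      fin_cases x <;>
        simp [h, hw, ← hs, ← ht, hfg]
    have hmback : (FreeGroup.lift (fun x : ℕ =>
        if x = s then FreeGroup.of (0 : Fin 2) else if x = t then FreeGroup.of (1 : Fin 2)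
        else 1)).comp ((FreeGroup.lift g).comp h) = MonoidHom.id _ := by
      rw [hcomp]
      apply FreeGroup.ext_hom
      intro x
      fin_cases x <;> simp [hst, hst.symm]
    have hinj : Function.Injective h := by
      intro x y hxy
      have hxy2 : ((FreeGroup.lift (fun x : ℕ =>
          if x = s then FreeGroup.of (0 : Fin 2) else if x = t then FreeGroup.of (1 : Fin 2)
          else 1)).comp ((FreeGroup.lift g).comp h)) x =
          ((FreeGroup.lift (fun x : ℕ =>
          if x = s then FreeGroup.of (0 : Fin 2) else if x = t then FreeGroup.of (1 : Fin 2)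
          else 1)).comp ((FreeGroup.lift g).comp h)) y := by
        simp only [MonoidHom.comp_apply, hxy]
      rwa [hmback, MonoidHom.id_apply, MonoidHom.id_apply] at hxy2
    have hrange : h.range = Subgroup.closure ({a, b} : Set (FreeGroup ℕ)) := by
      rw [show h = FreeGroup.lift w from rfl, FreeGroup.range_lift_eq_closure]
      congr 1
      ext x
      constructor
      · rintro ⟨y, rfl⟩; fin_cases y <;> simp [hw]
      · rintro (rfl | rfl)
        exacts [⟨0, rfl⟩, ⟨1, rfl⟩]
    let e : FreeGroup (Fin 2) ≃* h.range := MonoidHom.ofInjective hinj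
    let e2 : h.range ≃* Subgroup.closure ({a, b} : Set (FreeGroup ℕ)) :=
      MulEquiv.subgroupCongr hrange
    refine ⟨FreeGroupBasis.ofRepr (e.trans e2).symm, ?_, ?_⟩
    · ext
      show ((e.trans e2).symm.symm (FreeGroup.of 0) : FreeGroup ℕ) = a
      show ((MonoidHom.ofInjective hinj (FreeGroup.of 0) : h.range) : FreeGroup ℕ) = a
      rw [MonoidHom.ofInjective_apply]
      simp [h, hw]
    · ext
      show ((e.trans e2).symm.symm (FreeGroup.of 1) : FreeGroup ℕ) = b
      show ((MonoidHom.ofInjective hinj (FreeGroup.of 1) : h.range) : FreeGroup ℕ) = b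
      rw [MonoidHom.ofInjective_apply]
      simp [h, hw]
theorem stmt6 (n i j k l : ℕ) (hi : 1 ≤ i) (hi' : i ≤ n) (hj : 1 ≤ j) (hj' : j ≤ n)
    (hk : 1 ≤ k) (hk' : k ≤ n) (hl : 1 ≤ l) (hl' : l ≤ n)
    (hcase : i ≠ k ∨ (i, j) = (k, l)) :
    (∃ (ι : Type) (b : FreeGroupBasis ι (FreeGroup ℕ)) (s t : ι), s ≠ t ∧
        b s = (FreeGroup.of (i + j)) ^ 5 * FreeGroup.of i ∧
        b t = (FreeGroup.of k)⁻¹ * (FreeGroup.of (k + l)) ^ (-4 : ℤ)) ∧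
    ∃ c : FreeGroupBasis (Fin 2) (Subgroup.closure
        ({(FreeGroup.of (i + j)) ^ 5 * FreeGroup.of i,
          (FreeGroup.of k)⁻¹ * (FreeGroup.of (k + l)) ^ (-4 : ℤ)} : Set (FreeGroup ℕ))),
      c 0 = ⟨(FreeGroup.of (i + j)) ^ 5 * FreeGroup.of i, Subgroup.subset_closure (by simp)⟩ ∧
      c 1 = ⟨(FreeGroup.of k)⁻¹ * (FreeGroup.of (k + l)) ^ (-4 : ℤ),
              Subgroup.subset_closure (by simp)⟩ := by
  have hui : i + j ≠ i := by omega
  have hvk : k + l ≠ k := by omega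
  rcases hcase with hik | heq
  · -- case i ≠ k
    have hnb : ¬(i + j = k ∧ k + l = i) := by omega
    set u := i + j with hu
    set v := k + l with hv
    refine aux
      (fun m => if m = i then (FreeGroup.of u) ^ 5 * FreeGroup.of i
        else if m = k then (FreeGroup.of k)⁻¹ * (FreeGroup.of v) ^ (-4 : ℤ)
        else FreeGroup.of m)
      (fun m => if m = i then
          (if u = k then ((FreeGroup.of v) ^ (-4 : ℤ) * (FreeGroup.of k)⁻¹) ^ (-5 : ℤ) *
              FreeGroup.of i
           else (FreeGroup.of u) ^ (-5 : ℤ) * FreeGroup.of i)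
        else if m = k then
          (if v = i then ((FreeGroup.of u) ^ (-5 : ℤ) * FreeGroup.of i) ^ (-4 : ℤ) *
              (FreeGroup.of k)⁻¹
           else (FreeGroup.of v) ^ (-4 : ℤ) * (FreeGroup.of k)⁻¹)
        else FreeGroup.of m)
      ?_ ?_ i k hik _ _ (by simp) (by simp [Ne.symm hik])
    · intro m
      by_cases hm : m = i
      · by_cases huk : u = k
        · have hvi : v ≠ i := fun hvi => hnb ⟨huk, hvi⟩
          simp [hm, hui, huk, hvi, hvk, Ne.symm hik, map_mul, map_pow, map_zpow, map_inv]
        · simp [hm, hui, huk, map_mul, map_pow, map_zpow, map_inv]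
      · by_cases hmk : m = k
        · by_cases hvi : v = i
          · have huk : u ≠ k := fun huk => hnb ⟨huk, hvi⟩
            simp [hm, hmk, hvi, huk, hvk, hui, Ne.symm hik, map_mul, map_pow, map_zpow, map_inv]
          · simp [hm, hmk, hvi, hvk, Ne.symm hik, map_mul, map_pow, map_zpow, map_inv]
        · simp [hm, hmk]
    · intro m
      by_cases hm : m = i
      · by_cases huk : u = k
        · have hvi : v ≠ i := fun hvi => hnb ⟨huk, hvi⟩
          simp [hm, hui, huk, hvi, hvk, Ne.symm hik,
            map_mul, map_pow, map_zpow, map_inv]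
        · simp [hm, hui, huk, map_mul, map_pow, map_zpow, map_inv]
      · by_cases hmk : m = k
        · by_cases hvi : v = i
          · have huk : u ≠ k := fun huk => hnb ⟨huk, hvi⟩
            simp [hm, hmk, hvi, huk, hui, Ne.symm hik,
              map_mul, map_pow, map_zpow, map_inv]
          · simp [hm, hmk, hvi, hvk, Ne.symm hik, map_mul, map_pow, map_zpow, map_inv]
        · simp [hm, hmk]
  · -- case (i, j) = (k, l)
    obtain ⟨rfl, rfl⟩ : i = k ∧ j = l := by simpa [Prod.ext_iff] using heq
    set u := i + j with hu
    refine aux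
      (fun m => if m = i then (FreeGroup.of u) ^ 5 * FreeGroup.of i
        else if m = u then (FreeGroup.of i)⁻¹ * (FreeGroup.of u) ^ (-4 : ℤ)
        else FreeGroup.of m)
      (fun m => if m = i then (FreeGroup.of i * FreeGroup.of u) ^ (-5 : ℤ) * FreeGroup.of i
        else if m = u then FreeGroup.of i * FreeGroup.of u
        else FreeGroup.of m)
      ?_ ?_ i u (Ne.symm hui) _ _ (by simp) (by simp [hui])
    · intro m
      by_cases hm : m = i
      · simp [hm, hui, map_mul, map_pow, map_zpow, map_inv]
      · by_cases hmu : m = u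
        · simp [hm, hmu, hui, map_mul, map_pow, map_zpow, map_inv]
          group
        · simp [hm, hmu]
    · intro m
      by_cases hm : m = i
      · simp [hm, hui, map_mul, map_pow, map_zpow, map_inv]
        group
      · by_cases hmu : m = u
        · simp [hm, hmu, hui, map_mul, map_pow, map_zpow, map_inv]
          group
        · simp [hm, hmu]
end

section
/- Let a group G act on a tree T. If u and v are hyperbolic elements of G whose axes intersect in a segment of length at least tr(u) + tr(v) + 1, and all edge stabilizers of the action are trivial, then u and v commute. -/
namespace TreeAux

open SimpleGraph

variable {V : Type*} {T : SimpleGraph V}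

/-- distance from start to i-th vertex of a walk is at most i -/
lemma dist_start_getVert_le (hc : T.Connected) {a b : V} (w : T.Walk a b) (i : ℕ) :
    T.dist a (w.getVert i) ≤ i := by
  induction w generalizing i with
  | nil => exact le_trans (le_of_eq SimpleGraph.dist_self) (Nat.zero_le i)
  | @cons a a' b h w ih =>
    cases i with
    | zero => simp
    | succ i =>
      rw [SimpleGraph.Walk.getVert_cons_succ]
      calc T.dist a (w.getVert i) ≤ T.dist a a' + T.dist a' (w.getVert i) :=
            hc.dist_triangle
        _ ≤ 1 + i := by
            gcongr
            · exact le_of_eq (SimpleGraph.dist_eq_one_iff_adj.2 h)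
            · exact ih i
        _ = i + 1 := by omega

lemma dist_getVert_end_le (hc : T.Connected) {a b : V} (w : T.Walk a b) (i : ℕ) :
    T.dist (w.getVert i) b ≤ w.length - i := by
  induction w generalizing i with
  | nil => simp [SimpleGraph.Walk.getVert]
  | @cons a a' b h w ih =>
    cases i with
    | zero =>
      simp only [SimpleGraph.Walk.getVert_zero, SimpleGraph.Walk.length_cons, Nat.sub_zero]
      exact le_trans (SimpleGraph.dist_le (SimpleGraph.Walk.cons h w)) (le_refl _)
    | succ i =>
      rw [SimpleGraph.Walk.getVert_cons_succ]
      simpa using ih i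

/-- On a geodesic walk, distance from start to i-th vertex is exactly i. -/
lemma dist_start_getVert (hc : T.Connected) {a b : V} (w : T.Walk a b)
    (hw : w.length = T.dist a b) {i : ℕ} (hi : i ≤ w.length) :
    T.dist a (w.getVert i) = i := by
  have h1 := dist_start_getVert_le hc w i
  have h2 := dist_getVert_end_le hc w i
  have h3 : T.dist a b ≤ T.dist a (w.getVert i) + T.dist (w.getVert i) b :=
    hc.dist_triangle
  omega

lemma dist_getVert_end (hc : T.Connected) {a b : V} (w : T.Walk a b)
    (hw : w.length = T.dist a b) {i : ℕ} (hi : i ≤ w.length) :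
    T.dist (w.getVert i) b = w.length - i := by
  have h1 := dist_start_getVert_le hc w i
  have h2 := dist_getVert_end_le hc w i
  have h3 : T.dist a b ≤ T.dist a (w.getVert i) + T.dist (w.getVert i) b :=
    hc.dist_triangle
  omega

/-- On a geodesic walk, subsegment distances are exact. -/
lemma dist_getVert_getVert (hc : T.Connected) {a b : V} (w : T.Walk a b)
    (hw : w.length = T.dist a b) {i j : ℕ} (hij : i ≤ j) (hj : j ≤ w.length) :
    T.dist (w.getVert i) (w.getVert j) = j - i := by
  induction w generalizing i j with
  | nil =>
    simp only [SimpleGraph.Walk.length_nil, Nat.le_zero] at hj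
    subst hj
    have : i = 0 := by omega
    subst this
    simp
  | @cons a a' b h w ih =>
    cases i with
    | zero =>
      rw [SimpleGraph.Walk.getVert_zero]
      exact dist_start_getVert hc _ hw hj
    | succ i =>
      cases j with
      | zero => omega
      | succ j =>
        rw [SimpleGraph.Walk.getVert_cons_succ, SimpleGraph.Walk.getVert_cons_succ]
        have hw' : w.length = T.dist a' b := by
          have h1 : T.dist a' b ≤ w.length := SimpleGraph.dist_le w
          have h2 : T.dist a b ≤ T.dist a a' + T.dist a' b := hc.dist_triangle
          have h3 : T.dist a a' ≤ 1 := le_of_eq (SimpleGraph.dist_eq_one_iff_adj.2 h)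
          simp only [SimpleGraph.Walk.length_cons] at hw
          omega
        have := ih hw' (i := i) (j := j) (by omega) (by simpa using hj)
        omega


/-- `m` lies between `a` and `b`. -/
def Btwn (T : SimpleGraph V) (a m b : V) : Prop :=
  T.dist a m + T.dist m b = T.dist a b

lemma Btwn.symm {a m b : V} (h : Btwn T a m b) : Btwn T b m a := by
  unfold Btwn at *
  have e1 : T.dist b m = T.dist m b := SimpleGraph.dist_comm
  have e2 : T.dist m a = T.dist a m := SimpleGraph.dist_comm
  have e3 : T.dist b a = T.dist a b := SimpleGraph.dist_comm
  omega

lemma btwn_getVert (hc : T.Connected) {a b : V} (w : T.Walk a b)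
    (hw : w.length = T.dist a b) {i : ℕ} (hi : i ≤ w.length) :
    Btwn T a (w.getVert i) b ∧ T.dist a (w.getVert i) = i := by
  have h1 := dist_start_getVert hc w hw hi
  have h2 := dist_getVert_end hc w hw hi
  constructor
  · unfold Btwn
    omega
  · exact h1

/-- two geodesics concatenated along a between point form the unique path -/
lemma btwn_ordering (htree : T.IsTree) {a b m n : V} (hm : Btwn T a m b)
    (hn : Btwn T a n b) (h : T.dist a m ≤ T.dist a n) :
    T.dist m n = T.dist a n - T.dist a m := by
  have hc := htree.isConnected
  unfold Btwn at hm hn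
  obtain ⟨w1, hw1⟩ := hc.exists_walk_length_eq_dist a m
  obtain ⟨w2, hw2⟩ := hc.exists_walk_length_eq_dist m b
  obtain ⟨w3, hw3⟩ := hc.exists_walk_length_eq_dist a n
  obtain ⟨w4, hw4⟩ := hc.exists_walk_length_eq_dist n b
  set W : T.Walk a b := w1.append w2 with hW
  set W' : T.Walk a b := w3.append w4 with hW'
  have hWlen : W.length = T.dist a b := by
    rw [hW, SimpleGraph.Walk.length_append]; omega
  have hW'len : W'.length = T.dist a b := by
    rw [hW', SimpleGraph.Walk.length_append]; omega
  have hWpath : W.IsPath := W.isPath_of_length_eq_dist hWlen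
  have hW'path : W'.IsPath := W'.isPath_of_length_eq_dist hW'len
  obtain ⟨p, -, hpuniq⟩ := htree.existsUnique_path a b
  have hWW' : W = W' := by rw [hpuniq W hWpath, hpuniq W' hW'path]
  have hmW : W.getVert (T.dist a m) = m := by
    rw [hW, SimpleGraph.Walk.getVert_append]
    rw [hw1]
    simp
  have hnW : W.getVert (T.dist a n) = n := by
    rw [hWW', hW', SimpleGraph.Walk.getVert_append]
    rw [hw3]
    simp
  have hj : T.dist a n ≤ W.length := by
    omega
  have := dist_getVert_getVert hc W hWlen (i := T.dist a m) (j := T.dist a n) h hj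
  rw [hmW, hnW] at this
  exact this

lemma btwn_unique (htree : T.IsTree) {a b m n : V} (hm : Btwn T a m b)
    (hn : Btwn T a n b) (h : T.dist a m = T.dist a n) : m = n := by
  have h0 : T.dist m n = 0 := by
    have := btwn_ordering htree hm hn (le_of_eq h)
    omega
  exact (htree.isConnected.dist_eq_zero_iff).1 h0

/-- In a tree, adjacent vertices are at different distances from any vertex. -/
lemma adj_dist_ne (htree : T.IsTree) {s t : V} (hadj : T.Adj s t) (a : V) :
    T.dist a s ≠ T.dist a t := by
  intro heq
  have hc := htree.isConnected
  obtain ⟨p1, hp1⟩ := hc.exists_walk_length_eq_dist a s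
  have hp1path : p1.IsPath := p1.isPath_of_length_eq_dist hp1
  obtain ⟨p2, hp2⟩ := hc.exists_walk_length_eq_dist a t
  have hp2path : p2.IsPath := p2.isPath_of_length_eq_dist hp2
  have htns : t ∉ p1.support := by
    intro hmem
    obtain ⟨i, hgi, hile⟩ := SimpleGraph.Walk.mem_support_iff_exists_getVert.1 hmem
    have : T.dist a t = i := by rw [← hgi]; exact dist_start_getVert hc p1 hp1 hile
    have hieq : i = p1.length := by omega
    have : t = s := by rw [← hgi, hieq, SimpleGraph.Walk.getVert_length]
    exact hadj.ne' this
  set e : T.Walk s t := SimpleGraph.Walk.cons hadj SimpleGraph.Walk.nil with he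
  set W : T.Walk a t := p1.append e with hW
  have hWpath : W.IsPath := by
    rw [SimpleGraph.Walk.isPath_def, SimpleGraph.Walk.support_append]
    have hetail : e.support.tail = [t] := by simp [he]
    rw [hetail]
    refine List.Nodup.append ((SimpleGraph.Walk.isPath_def _).1 hp1path)
      (List.nodup_singleton t) ?_
    intro x hx1 hx2
    rw [List.mem_singleton] at hx2
    subst hx2
    exact htns hx1
  obtain ⟨p, -, hpuniq⟩ := htree.existsUnique_path a t
  have hWp2 : W = p2 := by rw [hpuniq W hWpath, hpuniq p2 hp2path]
  have hlen : W.length = p1.length + 1 := by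
    rw [hW, SimpleGraph.Walk.length_append, he]
    simp
  rw [hWp2, hp2] at hlen
  omega

/-- In a tree, adjacent vertices are at distance exactly one apart from any vertex. -/
lemma adj_dist_cases (htree : T.IsTree) {s t : V} (hadj : T.Adj s t) (a : V) :
    T.dist a t = T.dist a s + 1 ∨ T.dist a s = T.dist a t + 1 := by
  have hc := htree.isConnected
  have h1 : T.dist s t = 1 := SimpleGraph.dist_eq_one_iff_adj.2 hadj
  have h2 : T.dist t s = 1 := by rw [SimpleGraph.dist_comm]; exact h1
  have t1 : T.dist a t ≤ T.dist a s + T.dist s t := hc.dist_triangle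
  have t2 : T.dist a s ≤ T.dist a t + T.dist t s := hc.dist_triangle
  have := adj_dist_ne htree hadj a
  omega

lemma getVert_one_takeUntil [DecidableEq V] {b a s : V} (w : T.Walk b a)
    (hs : s ∈ w.support) (hne : s ≠ b) :
    (w.takeUntil s hs).getVert 1 = w.getVert 1 := by
  have hspec := SimpleGraph.Walk.take_spec w hs
  have hlen : (w.takeUntil s hs).length ≠ 0 := by
    intro h0
    exact hne (SimpleGraph.Walk.eq_of_length_eq_zero h0).symm
  conv_rhs => rw [← hspec]
  rw [SimpleGraph.Walk.getVert_append]
  by_cases h1 : 1 < (w.takeUntil s hs).length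
  · simp [h1]
  · have hl1 : (w.takeUntil s hs).length = 1 := by omega
    simp only [hl1, lt_irrefl, if_false, Nat.sub_self, SimpleGraph.Walk.getVert_zero]
    rw [show (1 : ℕ) = (w.takeUntil s hs).length from hl1.symm,
      SimpleGraph.Walk.getVert_length]

/-- If the unique geodesics from b to a and from b to c start with different edges,
then b is between a and c. -/
lemma first_step_dichotomy (htree : T.IsTree) {a b c : V}
    (w : T.Walk b a) (hw : w.length = T.dist b a)
    (q : T.Walk b c) (hq : q.length = T.dist b c)
    (hne : w.getVert 1 ≠ q.getVert 1) :
    T.dist a c = T.dist a b + T.dist b c := by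
  classical
  have hc := htree.isConnected
  have hwpath : w.IsPath := w.isPath_of_length_eq_dist hw
  have hqpath : q.IsPath := q.isPath_of_length_eq_dist hq
  -- supports meet only at b
  have hsupp : ∀ x, x ∈ w.support → x ∈ q.support → x = b := by
    intro x hxw hxq
    by_contra hxb
    have h1 := getVert_one_takeUntil w hxw hxb
    have h2 := getVert_one_takeUntil q hxq hxb
    obtain ⟨p, -, hpuniq⟩ := htree.existsUnique_path b x
    have e : w.takeUntil x hxw = q.takeUntil x hxq := by
      rw [hpuniq _ (hwpath.takeUntil hxw), hpuniq _ (hqpath.takeUntil hxq)]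
    exact hne (by rw [← h1, ← h2, e])
  set W : T.Walk a c := w.reverse.append q with hW
  have hWpath : W.IsPath := by
    rw [SimpleGraph.Walk.isPath_def, SimpleGraph.Walk.support_append]
    refine List.Nodup.append ?_ ?_ ?_
    · rw [SimpleGraph.Walk.support_reverse]
      exact List.nodup_reverse.2 ((SimpleGraph.Walk.isPath_def _).1 hwpath)
    · have hndq := (SimpleGraph.Walk.isPath_def _).1 hqpath
      rw [SimpleGraph.Walk.support_eq_cons] at hndq
      exact List.Nodup.of_cons hndq
    · intro x hx1 hx2
      have hxw : x ∈ w.support := by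
        rw [SimpleGraph.Walk.support_reverse] at hx1
        exact List.mem_reverse.1 hx1
      have hxq : x ∈ q.support := List.mem_of_mem_tail hx2
      have hxb : x = b := hsupp x hxw hxq
      have hbnt : b ∉ q.support.tail := by
        have hnd := (SimpleGraph.Walk.isPath_def _).1 hqpath
        rw [SimpleGraph.Walk.support_eq_cons] at hnd
        exact (List.nodup_cons.1 hnd).1
      rw [hxb] at hx2
      exact hbnt hx2
  obtain ⟨pgeo, hpgeo⟩ := hc.exists_walk_length_eq_dist a c
  have hpgeopath : pgeo.IsPath := pgeo.isPath_of_length_eq_dist hpgeo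
  obtain ⟨p, -, hpuniq⟩ := htree.existsUnique_path a c
  have hWp : W = pgeo := by rw [hpuniq W hWpath, hpuniq pgeo hpgeopath]
  have hWlen : W.length = w.length + q.length := by
    rw [hW, SimpleGraph.Walk.length_append, SimpleGraph.Walk.length_reverse]
  have hab : T.dist a b = T.dist b a := SimpleGraph.dist_comm
  rw [hWp, hpgeo] at hWlen
  omega

lemma exists_median (htree : T.IsTree) (a b c : V) :
    ∃ m, Btwn T a m b ∧ Btwn T a m c ∧ Btwn T b m c := by
  have hc := htree.isConnected
  generalize hn : T.dist a b = n
  induction n using Nat.strong_induction_on generalizing b with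
  | _ n ih =>
  by_cases hbase : T.dist a b + T.dist b c = T.dist a c
  · refine ⟨b, ?_, ?_, ?_⟩ <;> unfold Btwn
    · rw [SimpleGraph.dist_self]; omega
    · exact hbase
    · rw [SimpleGraph.dist_self]; omega
  · have hab0 : T.dist a b ≠ 0 := by
      intro h0
      have : a = b := hc.dist_eq_zero_iff.1 h0
      subst this
      rw [h0] at hbase
      omega
    have hbc0 : T.dist b c ≠ 0 := by
      intro h0
      have : b = c := hc.dist_eq_zero_iff.1 h0
      subst this
      rw [h0] at hbase
      omega
    have hba0 : T.dist b a ≠ 0 := by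
      rw [SimpleGraph.dist_comm]; exact hab0
    obtain ⟨w, hw⟩ := hc.exists_walk_length_eq_dist b a
    obtain ⟨q, hq⟩ := hc.exists_walk_length_eq_dist b c
    have hwpos : 0 < w.length := by omega
    have hqpos : 0 < q.length := by omega
    set b' := w.getVert 1 with hb'
    have hadjbb' : T.Adj b b' := by
      have := w.adj_getVert_succ (i := 0) hwpos
      rwa [SimpleGraph.Walk.getVert_zero] at this
    have hb'a : T.dist b' a + 1 = T.dist b a := by
      have h11 := dist_getVert_getVert hc w hw (i := 1) (j := w.length) hwpos le_rfl
      rw [SimpleGraph.Walk.getVert_length, ← hb'] at h11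
      omega
    have hb'c : T.dist b' c + 1 = T.dist b c := by
      set b'' := q.getVert 1 with hb''
      have hb''c : T.dist b'' c + 1 = T.dist b c := by
        have h11 := dist_getVert_getVert hc q hq (i := 1) (j := q.length) hqpos le_rfl
        rw [SimpleGraph.Walk.getVert_length, ← hb''] at h11
        omega
      by_cases hbb : b'' = b'
      · rw [← hbb]; exact hb''c
      · exfalso
        have hne : w.getVert 1 ≠ q.getVert 1 := by
          rw [← hb', ← hb'']
          exact fun h => hbb h.symm
        have hdich := first_step_dichotomy htree w hw q hq hne
        exact hbase (by omega)
    have hab' : T.dist a b' + 1 = T.dist a b := by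
      have e1 : T.dist a b' = T.dist b' a := SimpleGraph.dist_comm
      have e2 : T.dist a b = T.dist b a := SimpleGraph.dist_comm
      omega
    obtain ⟨m, hm1, hm2, hm3⟩ := ih (T.dist a b') (by omega) b' rfl
    have hbb'1 : T.dist b b' = 1 := SimpleGraph.dist_eq_one_iff_adj.2 hadjbb'
    have hb'b1 : T.dist b' b = 1 := by
      rw [SimpleGraph.dist_comm]; exact hbb'1
    unfold Btwn at hm1 hm2 hm3 ⊢
    have tri1 : T.dist a b ≤ T.dist a m + T.dist m b := hc.dist_triangle
    have tri2 : T.dist b c ≤ T.dist b m + T.dist m c := hc.dist_triangle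
    have tri3 : T.dist m b ≤ T.dist m b' + T.dist b' b := hc.dist_triangle
    have tri4 : T.dist b m ≤ T.dist b b' + T.dist b' m := hc.dist_triangle
    have e3 : T.dist m b' = T.dist b' m := SimpleGraph.dist_comm
    refine ⟨m, by omega, hm2, by omega⟩

lemma four_point (htree : T.IsTree) (a b c e : V) :
    T.dist a b + T.dist c e ≤
      max (T.dist a c + T.dist b e) (T.dist a e + T.dist b c) := by
  have hc := htree.isConnected
  obtain ⟨m1, h1ab, h1ac, h1bc⟩ := exists_median htree a b c
  obtain ⟨m2, h2ab, h2ae, h2be⟩ := exists_median htree a b e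
  have tri : T.dist c e ≤ T.dist c m1 + T.dist m1 m2 + T.dist m2 e := by
    calc T.dist c e ≤ T.dist c m1 + T.dist m1 e := hc.dist_triangle
      _ ≤ T.dist c m1 + (T.dist m1 m2 + T.dist m2 e) := by
          gcongr; exact hc.dist_triangle
      _ = _ := by omega
  unfold Btwn at h1ab h1ac h1bc h2ab h2ae h2be
  have ec : T.dist c m1 = T.dist m1 c := SimpleGraph.dist_comm
  have ee : T.dist e m2 = T.dist m2 e := SimpleGraph.dist_comm
  have eb : T.dist m1 b = T.dist b m1 := SimpleGraph.dist_comm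
  have eb2 : T.dist m2 b = T.dist b m2 := SimpleGraph.dist_comm
  rcases le_total (T.dist a m1) (T.dist a m2) with hord | hord
  · have hmm := btwn_ordering htree h1ab h2ab hord
    refine le_trans ?_ (le_max_right _ _)
    omega
  · have hmm := btwn_ordering htree h2ab h1ab hord
    have emm : T.dist m1 m2 = T.dist m2 m1 := SimpleGraph.dist_comm
    refine le_trans ?_ (le_max_left _ _)
    omega

section GroupAction

variable {G : Type*} [Group G] [MulAction G V]

lemma dist_smul_eq (hc : T.Connected)
    (hadj : ∀ (g : G) (x y : V), T.Adj x y → T.Adj (g • x) (g • y))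
    (g : G) (a b : V) : T.dist (g • a) (g • b) = T.dist a b := by
  have key : ∀ (g : G) (a b : V), T.dist (g • a) (g • b) ≤ T.dist a b := by
    intro g a b
    obtain ⟨w, hw⟩ := hc.exists_walk_length_eq_dist a b
    let f : T →g T := ⟨fun z => g • z, fun h => hadj g _ _ h⟩
    have := SimpleGraph.dist_le (w.map f)
    rwa [SimpleGraph.Walk.length_map, hw] at this
  refine le_antisymm (key g a b) ?_
  have h2 := key g⁻¹ (g • a) (g • b)
  rwa [inv_smul_smul, inv_smul_smul] at h2

lemma orient_aux (htree : T.IsTree)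
    (hiso : ∀ (g : G) (a b : V), T.dist (g • a) (g • b) = T.dist a b)
    {u : G} {ℓ : ℕ} {x y : V}
    (hmin : ∀ s : V, ℓ ≤ T.dist s (u • s))
    (hx : T.dist x (u • x) = ℓ) (hy : T.dist y (u • y) = ℓ)
    (hD : ℓ < T.dist x y)
    (hαβ : T.dist x (u • y) + T.dist y (u • x) = 2 * T.dist x y)
    (hα : T.dist x y ≤ T.dist x (u • y)) :
    T.dist x (u • y) = T.dist x y + ℓ := by
  have hc := htree.isConnected
  by_contra hne
  have htri : T.dist x (u • y) ≤ T.dist x y + T.dist y (u • y) := hc.dist_triangle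
  -- so dist x (u•y) = D + t with 0 ≤ t < ℓ
  obtain ⟨n, hn1, hn2, hn3⟩ := exists_median htree y x (u • y)
  obtain ⟨M, hm1, hm2, hm3⟩ := exists_median htree (u • y) x (u • x)
  have hn1' := hn1; have hn2' := hn2; have hn3' := hn3
  unfold Btwn at hn1' hn2' hn3'
  have hm1' := hm1; have hm2' := hm2; have hm3' := hm3
  unfold Btwn at hm1' hm2' hm3'
  -- commutativity facts
  have c1 : T.dist y x = T.dist x y := SimpleGraph.dist_comm
  have c2 : T.dist x n = T.dist n x := SimpleGraph.dist_comm
  have c3 : T.dist (u • y) n = T.dist n (u • y) := SimpleGraph.dist_comm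
  have c4 : T.dist (u • y) x = T.dist x (u • y) := SimpleGraph.dist_comm
  have c5 : T.dist (u • y) (u • x) = T.dist x y := by
    rw [hiso u y x]; exact c1
  have c7 : T.dist x M = T.dist M x := SimpleGraph.dist_comm
  have hIson : T.dist (u • y) (u • n) = T.dist y n := hiso u y n
  have hIsonx : T.dist (u • n) (u • x) = T.dist n x := hiso u n x
  have hbnx : Btwn T (u • y) n x := by unfold Btwn; omega
  have hbun : Btwn T (u • y) (u • n) (u • x) := by unfold Btwn; omega
  have hle1 : T.dist (u • y) n ≤ T.dist (u • y) M := by omega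
  have hle2 : T.dist (u • y) (u • n) ≤ T.dist (u • y) M := by omega
  have ord1 := btwn_ordering htree hbnx hm1 hle1
  have ord2 := btwn_ordering htree hbun hm2 hle2
  have c6 : T.dist (u • n) (u • y) = T.dist (u • y) (u • n) := SimpleGraph.dist_comm
  have h4 := four_point htree n (u • n) (u • y) M
  have hbound : max (T.dist n (u • y) + T.dist (u • n) M)
      (T.dist n M + T.dist (u • n) (u • y)) ≤
      T.dist (u • y) M + (T.dist x (u • y) - T.dist x y) :=
    max_le (by omega) (by omega)
  have hcontra := hmin n
  omega

lemma orient (htree : T.IsTree)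
    (hiso : ∀ (g : G) (a b : V), T.dist (g • a) (g • b) = T.dist a b)
    {u : G} {ℓ : ℕ} {x y : V}
    (hmin : ∀ s : V, ℓ ≤ T.dist s (u • s))
    (hx : T.dist x (u • x) = ℓ) (hy : T.dist y (u • y) = ℓ)
    (hD : ℓ < T.dist x y) :
    (T.dist x (u • y) = T.dist x y + ℓ ∧ T.dist y (u • x) + ℓ = T.dist x y) ∨
    (T.dist y (u • x) = T.dist x y + ℓ ∧ T.dist x (u • y) + ℓ = T.dist x y) := by
  have hc := htree.isConnected
  have c1 : T.dist y x = T.dist x y := SimpleGraph.dist_comm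
  have c5 : T.dist (u • x) (u • y) = T.dist x y := hiso u x y
  have c5' : T.dist (u • y) (u • x) = T.dist x y := by
    rw [hiso u y x]; exact c1
  have c6 : T.dist (u • y) y = T.dist y (u • y) := SimpleGraph.dist_comm
  have c7 : T.dist (u • x) x = T.dist x (u • x) := SimpleGraph.dist_comm
  have hαβ : T.dist x (u • y) + T.dist y (u • x) = 2 * T.dist x y := by
    have fp1 := four_point htree x y (u • x) (u • y)
    have fp2 := four_point htree x (u • y) y (u • x)
    have hub : max (T.dist x y + T.dist (u • y) (u • x))
        (T.dist x (u • x) + T.dist (u • y) y) ≤ 2 * T.dist x y :=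
      max_le (by omega) (by omega)
    rcases le_max_iff.mp fp1 with h | h <;> omega
  rcases le_or_gt (T.dist x y) (T.dist x (u • y)) with hcase | hcase
  · have := orient_aux htree hiso hmin hx hy hD hαβ hcase
    left
    omega
  · have hαβ' : T.dist y (u • x) + T.dist x (u • y) = 2 * T.dist y x := by omega
    have hcase' : T.dist y x ≤ T.dist y (u • x) := by omega
    have := orient_aux htree hiso hmin hy hx (by omega) hαβ' hcase'
    right
    omega

lemma translate (htree : T.IsTree)
    (hiso : ∀ (g : G) (a b : V), T.dist (g • a) (g • b) = T.dist a b)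
    {u : G} {ℓ : ℕ} {x y p q : V}
    (hx : T.dist x (u • x) = ℓ) (hy : T.dist y (u • y) = ℓ)
    (ho1 : T.dist x (u • y) = T.dist x y + ℓ)
    (hp : Btwn T x p y) (hq : Btwn T x q y)
    (hpos : T.dist x q = T.dist x p + ℓ) : u • p = q := by
  have hc := htree.isConnected
  have hp' := hp; have hq' := hq
  unfold Btwn at hp' hq'
  have e1 : T.dist (u • x) (u • p) = T.dist x p := hiso u x p
  have e2 : T.dist (u • p) (u • y) = T.dist p y := hiso u p y
  have tri1 : T.dist x (u • p) ≤ T.dist x (u • x) + T.dist (u • x) (u • p) :=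
    hc.dist_triangle
  have tri2 : T.dist x (u • y) ≤ T.dist x (u • p) + T.dist (u • p) (u • y) :=
    hc.dist_triangle
  have hxup : T.dist x (u • p) = T.dist x p + ℓ := by omega
  have hbup : Btwn T x (u • p) (u • y) := by unfold Btwn; omega
  have tri3 : T.dist q (u • y) ≤ T.dist q y + T.dist y (u • y) := hc.dist_triangle
  have tri4 : T.dist x (u • y) ≤ T.dist x q + T.dist q (u • y) := hc.dist_triangle
  have hbq : Btwn T x q (u • y) := by unfold Btwn; omega
  exact btwn_unique htree hbup hbq (by omega)

end GroupAction

end TreeAux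

/-- The translation length of a map on a graph: the minimal displacement of a vertex. -/
noncomputable def trLen {V : Type*} (T : SimpleGraph V) (f : V → V) : ℕ :=
  sInf (Set.range fun x => T.dist x (f x))

/-- The axis of a map on a graph: the set of vertices of minimal displacement. -/
def axisSet {V : Type*} (T : SimpleGraph V) (f : V → V) : Set V :=
  {x | T.dist x (f x) = trLen T f}

/-- If `u`, `v` are hyperbolic elements of a group acting on a tree with trivial
edge stabilizers, and their axes intersect in a segment of length at least
`tr u + tr v + 1`, then `u` and `v` commute. -/
theorem stmt11 {G V : Type*} [Group G] [MulAction G V] (T : SimpleGraph V)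
    (htree : T.IsTree)
    (hadj : ∀ (g : G) (x y : V), T.Adj x y → T.Adj (g • x) (g • y))
    (hedge : ∀ (g : G) (x y : V), T.Adj x y → g • x = x → g • y = y → g = 1)
    (u v : G) (hu : ∀ x : V, u • x ≠ x) (hv : ∀ x : V, v • x ≠ x)
    (x y : V)
    (hx : x ∈ axisSet T (u • ·) ∩ axisSet T (v • ·))
    (hy : y ∈ axisSet T (u • ·) ∩ axisSet T (v • ·))
    (hd : trLen T (u • ·) + trLen T (v • ·) + 1 ≤ T.dist x y) :
    u * v = v * u := by
  classical
  have hc := htree.isConnected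
  have hiso : ∀ (g : G) (a b : V), T.dist (g • a) (g • b) = T.dist a b :=
    TreeAux.dist_smul_eq hc hadj
  obtain ⟨hx1, hx2⟩ := hx
  obtain ⟨hy1, hy2⟩ := hy
  set L1 := trLen T (u • ·) with hL1
  set L2 := trLen T (v • ·) with hL2
  have hxu : T.dist x (u • x) = L1 := hx1
  have hxv : T.dist x (v • x) = L2 := hx2
  have hyu : T.dist y (u • y) = L1 := hy1
  have hyv : T.dist y (v • y) = L2 := hy2
  have hminu : ∀ s, L1 ≤ T.dist s (u • s) := fun s => Nat.sInf_le ⟨s, rfl⟩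
  have hminv : ∀ s, L2 ≤ T.dist s (v • s) := fun s => Nat.sInf_le ⟨s, rfl⟩
  have hL1pos : 1 ≤ L1 := by
    have hne : (Set.range fun z => T.dist z (u • z)).Nonempty := ⟨_, ⟨x, rfl⟩⟩
    obtain ⟨x₀, hx₀⟩ := Nat.sInf_mem hne
    have hne0 : x₀ ≠ u • x₀ := fun h => hu x₀ h.symm
    have hpos := hc.pos_dist_of_ne hne0
    have heq : T.dist x₀ (u • x₀) = L1 := hx₀
    omega
  have hL2pos : 1 ≤ L2 := by
    have hne : (Set.range fun z => T.dist z (v • z)).Nonempty := ⟨_, ⟨x, rfl⟩⟩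
    obtain ⟨x₀, hx₀⟩ := Nat.sInf_mem hne
    have hne0 : x₀ ≠ v • x₀ := fun h => hv x₀ h.symm
    have hpos := hc.pos_dist_of_ne hne0
    have heq : T.dist x₀ (v • x₀) = L2 := hx₀
    omega
  set D := T.dist x y with hD
  have horu := TreeAux.orient htree hiso hminu hxu hyu (by omega)
  have horv := TreeAux.orient htree hiso hminv hxv hyv (by omega)
  obtain ⟨w, hw⟩ := hc.exists_walk_length_eq_dist x y
  set A : ℕ → V := fun k => w.getVert k with hA
  have hAb : ∀ k, k ≤ D → TreeAux.Btwn T x (A k) y ∧ T.dist x (A k) = k := by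
    intro k hk
    exact TreeAux.btwn_getVert hc w hw (by omega)
  have hAy : ∀ k, k ≤ D → T.dist y (A k) = D - k := by
    intro k hk
    have hb := (hAb k hk).1
    unfold TreeAux.Btwn at hb
    have hcm : T.dist (A k) y = T.dist y (A k) := SimpleGraph.dist_comm
    have hdk := (hAb k hk).2
    omega
  have fwd : ∀ (g : G) (ℓg : ℕ), T.dist x (g • x) = ℓg → T.dist y (g • y) = ℓg →
      T.dist x (g • y) = D + ℓg → ∀ k, k + ℓg ≤ D → g • A k = A (k + ℓg) := by
    intro g ℓg hgx hgy ho k hk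
    exact TreeAux.translate htree hiso hgx hgy ho (hAb k (by omega)).1
      (hAb (k + ℓg) hk).1 (by rw [(hAb (k + ℓg) hk).2, (hAb k (by omega)).2])
  have bwd : ∀ (g : G) (ℓg : ℕ), T.dist x (g • x) = ℓg → T.dist y (g • y) = ℓg →
      T.dist y (g • x) = D + ℓg → ∀ k, k ≤ D → ℓg ≤ k → g • A k = A (k - ℓg) := by
    intro g ℓg hgx hgy ho k hk hlk
    refine TreeAux.translate htree hiso hgy hgx ?_ ((hAb k hk).1).symm
      ((hAb (k - ℓg) (by omega)).1).symm ?_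
    · have hcm : T.dist y x = D := SimpleGraph.dist_comm
      rw [hcm]
      exact ho
    · rw [hAy _ (by omega), hAy _ hk]
      omega
  have hfinish : ∀ k0, k0 + 1 ≤ D →
      u • (v • A k0) = v • (u • A k0) →
      u • (v • A (k0 + 1)) = v • (u • A (k0 + 1)) → u * v = v * u := by
    intro k0 hk0 h1 h2
    have hadjk : T.Adj (A k0) (A (k0 + 1)) := w.adj_getVert_succ (by omega)
    set g : G := (v * u)⁻¹ * (u * v) with hg
    have hg1 : g • A k0 = A k0 := by
      rw [hg, mul_smul ((v * u)⁻¹) (u * v), mul_smul u v, h1, ← mul_smul v u,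
        inv_smul_smul]
    have hg2 : g • A (k0 + 1) = A (k0 + 1) := by
      rw [hg, mul_smul ((v * u)⁻¹) (u * v), mul_smul u v, h2, ← mul_smul v u,
        inv_smul_smul]
    have hgone := hedge g _ _ hadjk hg1 hg2
    rw [hg] at hgone
    exact (inv_mul_eq_one.mp hgone).symm
  rcases horu with ⟨hou1, hou2⟩ | ⟨hou1, hou2⟩ <;>
    rcases horv with ⟨hov1, hov2⟩ | ⟨hov1, hov2⟩
  · -- u fwd, v fwd
    refine hfinish 0 (by omega) ?_ ?_
    · rw [fwd v L2 hxv hyv hov1 0 (by omega),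
        fwd u L1 hxu hyu hou1 (0 + L2) (by omega),
        fwd u L1 hxu hyu hou1 0 (by omega),
        fwd v L2 hxv hyv hov1 (0 + L1) (by omega)]
      congr 1
      omega
    · rw [fwd v L2 hxv hyv hov1 1 (by omega),
        fwd u L1 hxu hyu hou1 (1 + L2) (by omega),
        fwd u L1 hxu hyu hou1 1 (by omega),
        fwd v L2 hxv hyv hov1 (1 + L1) (by omega)]
      congr 1
      omega
  · -- u fwd, v bwd
    refine hfinish L2 (by omega) ?_ ?_
    · rw [bwd v L2 hxv hyv hov1 L2 (by omega) (by omega),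
        fwd u L1 hxu hyu hou1 (L2 - L2) (by omega),
        fwd u L1 hxu hyu hou1 L2 (by omega),
        bwd v L2 hxv hyv hov1 (L2 + L1) (by omega) (by omega)]
      congr 1
      omega
    · rw [bwd v L2 hxv hyv hov1 (L2 + 1) (by omega) (by omega),
        fwd u L1 hxu hyu hou1 (L2 + 1 - L2) (by omega),
        fwd u L1 hxu hyu hou1 (L2 + 1) (by omega),
        bwd v L2 hxv hyv hov1 (L2 + 1 + L1) (by omega) (by omega)]
      congr 1
      omega
  · -- u bwd, v fwd
    refine hfinish L1 (by omega) ?_ ?_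
    · rw [fwd v L2 hxv hyv hov1 L1 (by omega),
        bwd u L1 hxu hyu hou1 (L1 + L2) (by omega) (by omega),
        bwd u L1 hxu hyu hou1 L1 (by omega) (by omega),
        fwd v L2 hxv hyv hov1 (L1 - L1) (by omega)]
      congr 1
      omega
    · rw [fwd v L2 hxv hyv hov1 (L1 + 1) (by omega),
        bwd u L1 hxu hyu hou1 (L1 + 1 + L2) (by omega) (by omega),
        bwd u L1 hxu hyu hou1 (L1 + 1) (by omega) (by omega),
        fwd v L2 hxv hyv hov1 (L1 + 1 - L1) (by omega)]
      congr 1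
      omega
  · -- u bwd, v bwd
    refine hfinish (L1 + L2) (by omega) ?_ ?_
    · rw [bwd v L2 hxv hyv hov1 (L1 + L2) (by omega) (by omega),
        bwd u L1 hxu hyu hou1 (L1 + L2 - L2) (by omega) (by omega),
        bwd u L1 hxu hyu hou1 (L1 + L2) (by omega) (by omega),
        bwd v L2 hxv hyv hov1 (L1 + L2 - L1) (by omega) (by omega)]
      congr 1
      omega
    · rw [bwd v L2 hxv hyv hov1 (L1 + L2 + 1) (by omega) (by omega),
        bwd u L1 hxu hyu hou1 (L1 + L2 + 1 - L2) (by omega) (by omega),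
        bwd u L1 hxu hyu hou1 (L1 + L2 + 1) (by omega) (by omega),
        bwd v L2 hxv hyv hov1 (L1 + L2 + 1 - L1) (by omega) (by omega)]
      congr 1
      omega
end
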